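/- Let n be a natural number, let α ∈ (0,1), and let θ ∈ [0,1]. For k ∈ {0,…,n} define the Clopper–Pearson upper bound U(k) := 1 if k = n, and U(k) := sSup { t ∈ [0,1] : Σ_{j=0}^{k} (n choose j) t^j (1−t)^{n−j} ≥ α } if k < n. If K is distributed according to the Binomial(n, θ) distribution, then Pr(θ ≤ U(K)) ≥ 1 − α; that is, the one-sided Clopper–Pearson upper confidence bound at level 1 − α covers the true success probability with probability at least 1 − α. -/

import Mathlib

open MeasureTheory

section Aux

variable (n : ℕ) (θ : ℝ)

/-- Binomial probability mass as a real function of the count. -/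
private noncomputable def cpG (j : ℕ) : ℝ := (n.choose j : ℝ) * θ ^ j * (1 - θ) ^ (n - j)

private lemma cpG_nonneg (h0 : 0 ≤ θ) (h1 : θ ≤ 1) (j : ℕ) : 0 ≤ cpG n θ j := by
  have h2 : (0:ℝ) ≤ 1 - θ := by linarith
  exact mul_nonneg (mul_nonneg (Nat.cast_nonneg _) (pow_nonneg h0 _)) (pow_nonneg h2 _)

private lemma cp_pmf_toReal (h0 : 0 ≤ θ) (h1 : θ ≤ 1) (k : Fin (n+1)) :
    ((PMF.binomial (Real.toNNReal θ) (Real.toNNReal_le_one.mpr h1) n) k).toReal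
      = cpG n θ (k : ℕ) := by
  rw [PMF.binomial_apply]
  simp only [Fin.val_last]
  rw [ENNReal.toReal_mul, ENNReal.toReal_mul, ENNReal.toReal_pow, ENNReal.toReal_pow,
    ENNReal.toReal_sub_of_le (by exact_mod_cast Real.toNNReal_le_one.mpr h1) ENNReal.one_ne_top,
    ENNReal.coe_toReal, Real.coe_toNNReal _ h0, ENNReal.toReal_one, ENNReal.toReal_natCast]
  unfold cpG
  ring

private lemma cp_total (h0 : 0 ≤ θ) (h1 : θ ≤ 1) :
    ∑ j ∈ Finset.range (n+1), cpG n θ j = 1 := by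
  have := add_pow θ (1 - θ) n
  simp only [add_sub_cancel, one_pow] at this
  rw [show (1:ℝ) = (θ + (1 - θ))^n by rw [add_sub_cancel, one_pow], add_pow]
  apply Finset.sum_congr rfl
  intro j hj
  unfold cpG
  ring

end Aux

/-- **Coverage of the one-sided Clopper–Pearson upper confidence bound.**
For `K ~ Binomial(n, θ)` and `α ∈ (0,1)`, the Clopper–Pearson upper bound
`U(k) = 1` if `k = n` and `U(k) = sSup {t ∈ [0,1] : F_{n,k}(t) ≥ α}` if `k < n`
covers the true success probability: `Pr(θ ≤ U(K)) ≥ 1 - α`. -/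
theorem clopper_pearson_coverage
    (n : ℕ) (α : ℝ) (hα : α ∈ Set.Ioo (0 : ℝ) 1)
    (θ : ℝ) (hθ : θ ∈ Set.Icc (0 : ℝ) 1) :
    1 - α ≤
      ((PMF.binomial (Real.toNNReal θ) (Real.toNNReal_le_one.mpr hθ.2) n).toMeasure
        {k : Fin (n + 1) |
          θ ≤ if (k : ℕ) = n then 1 else
            sSup {t : ℝ | t ∈ Set.Icc (0 : ℝ) 1 ∧
              α ≤ ∑ j ∈ Finset.range ((k : ℕ) + 1),
                    (n.choose j : ℝ) * t ^ j * (1 - t) ^ (n - j)}}).toReal := by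
  classical
  obtain ⟨hα0, hα1⟩ := hα
  have hθ0 := hθ.1
  have hθ1 := hθ.2
  set P := PMF.binomial (Real.toNNReal θ) (Real.toNNReal_le_one.mpr hθ.2) n with hP
  set S : Set (Fin (n + 1)) :=
      {k : Fin (n + 1) |
        θ ≤ if (k : ℕ) = n then 1 else
          sSup {t : ℝ | t ∈ Set.Icc (0 : ℝ) 1 ∧
            α ≤ ∑ j ∈ Finset.range ((k : ℕ) + 1),
                  (n.choose j : ℝ) * t ^ j * (1 - t) ^ (n - j)}} with hS
  -- partial sums
  set F : ℕ → ℝ := fun m => ∑ j ∈ Finset.range (m+1), cpG n θ j with hF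
  have hFmono : ∀ ⦃a b : ℕ⦄, a ≤ b → F a ≤ F b := by
    intro a b hab
    apply Finset.sum_le_sum_of_subset_of_nonneg
    · exact Finset.range_subset_range.mpr (by omega)
    · exact fun j _ _ => cpG_nonneg n θ hθ0 hθ1 j
  -- compute the measure as a real sum
  have hmeas : (P.toMeasure S).toReal
      = ∑ k ∈ Finset.univ.filter (fun k => k ∈ S), (fun k : Fin (n+1) => cpG n θ (k:ℕ)) k := by
    rw [PMF.toMeasure_apply_fintype]
    rw [ENNReal.toReal_sum (fun a _ => by
      by_cases h : a ∈ S <;> simp [Set.indicator_apply, h, PMF.apply_ne_top])]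
    rw [Finset.sum_filter]
    apply Finset.sum_congr rfl
    intro k _
    by_cases h : k ∈ S <;>
      simp [Set.indicator_apply, h, hP, cp_pmf_toReal n θ hθ0 hθ1]
  have htotal : ∑ k : Fin (n+1), cpG n θ (k:ℕ) = 1 := by
    rw [Fin.sum_univ_eq_sum_range (fun j => cpG n θ j)]
    exact cp_total n θ hθ0 hθ1
  have hsplit := Finset.sum_filter_add_sum_filter_not Finset.univ (fun k => k ∈ S)
      (fun k : Fin (n+1) => cpG n θ (k:ℕ))
  -- the complement is contained in the "lower tail below α" set
  have hsubset : Finset.univ.filter (fun k : Fin (n+1) => ¬ k ∈ S)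
      ⊆ Finset.univ.filter (fun k : Fin (n+1) => F (k:ℕ) < α) := by
    intro k hk
    simp only [Finset.mem_filter, Finset.mem_univ, true_and] at hk ⊢
    rw [hS, Set.mem_setOf_eq] at hk
    by_cases hkn : (k : ℕ) = n
    · rw [if_pos hkn] at hk; exact absurd hθ1 hk
    · rw [if_neg hkn] at hk
      by_contra hcon
      push_neg at hcon
      apply hk
      apply le_csSup
      · exact ⟨1, fun t ht => ht.1.2⟩
      · refine ⟨⟨hθ0, hθ1⟩, ?_⟩
        simpa [hF, cpG] using hcon
  -- the mass of the lower-tail set is ≤ α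
  have hbad : ∑ k ∈ Finset.univ.filter (fun k : Fin (n+1) => F (k:ℕ) < α),
      cpG n θ (k:ℕ) ≤ α := by
    set B := Finset.univ.filter (fun k : Fin (n+1) => F (k:ℕ) < α) with hB
    rcases B.eq_empty_or_nonempty with hE | hNE
    · rw [hE]; simp; linarith
    · set m := B.max' hNE with hm
      have hmB : m ∈ B := B.max'_mem hNE
      have hmF : F (m:ℕ) < α := by
        simpa [hB, Finset.mem_filter] using hmB
      have hsub2 : B ⊆ Finset.univ.filter (fun k : Fin (n+1) => (k:ℕ) ≤ (m:ℕ)) := by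
        intro k hk
        simp only [Finset.mem_filter, Finset.mem_univ, true_and]
        exact Fin.le_def.mp (Finset.le_max' B k hk)
      calc ∑ k ∈ B, cpG n θ (k:ℕ)
          ≤ ∑ k ∈ Finset.univ.filter (fun k : Fin (n+1) => (k:ℕ) ≤ (m:ℕ)), cpG n θ (k:ℕ) :=
            Finset.sum_le_sum_of_subset_of_nonneg hsub2
              (fun j _ _ => cpG_nonneg n θ hθ0 hθ1 _)
        _ = F (m:ℕ) := by
            rw [Finset.sum_filter,
              Fin.sum_univ_eq_sum_range (fun j => if j ≤ (m:ℕ) then cpG n θ j else 0),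
              hF, ← Finset.sum_filter]
            congr 1
            ext j
            simp only [Finset.mem_filter, Finset.mem_range]
            have := m.isLt
            omega
        _ ≤ α := le_of_lt hmF
  have hcomp : ∑ k ∈ Finset.univ.filter (fun k : Fin (n+1) => ¬ k ∈ S),
      cpG n θ (k:ℕ) ≤ α :=
    le_trans (Finset.sum_le_sum_of_subset_of_nonneg hsubset
      (fun j _ _ => cpG_nonneg n θ hθ0 hθ1 _)) hbad
  rw [hmeas]
  linarith [hsplit.symm ▸ htotal, hcomp]
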